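/- For every integer n ≥ 1, the number of Catalan words of length n avoiding the vincular pattern 12-1 equals 2^{n−1}, the number avoiding 12-3 equals 2^{n−1}, and the number avoiding 12-2 equals binom(n,2) + 1. -/

import Mathlib

/-- A Catalan word: a word of positive integers starting with 1 in which each
letter exceeds its predecessor by at most 1. -/
def IsCatalanWord {n : ℕ} (w : Fin n → ℕ) : Prop :=
  (∀ i, 1 ≤ w i) ∧ (∀ h : 0 < n, w ⟨0, h⟩ = 1) ∧
  ∀ i : ℕ, ∀ h : i + 1 < n, w ⟨i + 1, h⟩ ≤ w ⟨i, by omega⟩ + 1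

/-- `w` contains the vincular pattern 12-1: there are indices `i` and `k` with
`i + 1 < k`, `w i < w (i+1)` and `w k = w i`. -/
def Contains12_1 {n : ℕ} (w : Fin n → ℕ) : Prop :=
  ∃ i k : ℕ, ∃ hk : k < n, ∃ hik : i + 1 < k,
    w ⟨i, by omega⟩ < w ⟨i + 1, by omega⟩ ∧ w ⟨k, hk⟩ = w ⟨i, by omega⟩

/-- `w` contains the vincular pattern 12-2: there are indices `i` and `k` with
`i + 1 < k` and `w i < w (i+1) = w k`. -/
def Contains12_2 {n : ℕ} (w : Fin n → ℕ) : Prop :=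
  ∃ i k : ℕ, ∃ hk : k < n, ∃ hik : i + 1 < k,
    w ⟨i, by omega⟩ < w ⟨i + 1, by omega⟩ ∧ w ⟨i + 1, by omega⟩ = w ⟨k, hk⟩

/-- `w` contains the vincular pattern 12-3: there are indices `i` and `k` with
`i + 1 < k` and `w i < w (i+1) < w k`. -/
def Contains12_3 {n : ℕ} (w : Fin n → ℕ) : Prop :=
  ∃ i k : ℕ, ∃ hk : k < n, ∃ hik : i + 1 < k,
    w ⟨i, by omega⟩ < w ⟨i + 1, by omega⟩ ∧ w ⟨i + 1, by omega⟩ < w ⟨k, hk⟩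

lemma first_crossing {n : ℕ} {W : ℕ → ℕ} (h0 : W 0 = 1)
    (hstep : ∀ j, j + 1 < n → W (j+1) ≤ W j + 1)
    {v j : ℕ} (hv : 2 ≤ v) (hj : j < n) (hWj : v ≤ W j) :
    ∃ m, m ≤ j ∧ 1 ≤ m ∧ W m = v ∧ W (m-1) = v - 1 := by
  have hex : ∃ m, v ≤ W m := ⟨j, hWj⟩
  classical
  have hspec : v ≤ W (Nat.find hex) := Nat.find_spec hex
  have hmj : Nat.find hex ≤ j := Nat.find_min' hex hWj
  have hm1 : 1 ≤ Nat.find hex := by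
    rcases Nat.eq_zero_or_pos (Nat.find hex) with h | h
    · exfalso; rw [h] at hspec; omega
    · exact h
  have hmin : ¬ v ≤ W (Nat.find hex - 1) := Nat.find_min hex (by omega)
  have hstep' : W (Nat.find hex - 1 + 1) ≤ W (Nat.find hex - 1) + 1 :=
    hstep _ (by omega)
  rw [Nat.sub_add_cancel hm1] at hstep'
  exact ⟨Nat.find hex, hmj, hm1, by omega, by omega⟩
lemma avoid121_mono {n : ℕ} {W : ℕ → ℕ} (hpos : ∀ j, j < n → 1 ≤ W j) (h0 : W 0 = 1)
    (hstep : ∀ j, j + 1 < n → W (j+1) ≤ W j + 1)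
    (hav : ∀ i k, k < n → i + 1 < k → W i < W (i+1) → W k ≠ W i) :
    ∀ j, j + 1 < n → W j ≤ W (j+1) := by
  intro j hj
  by_contra hlt
  push_neg at hlt
  have hak : 1 ≤ W (j+1) := hpos (j+1) hj
  obtain ⟨m, hmj, hm1, hWm, hWm1⟩ := first_crossing h0 hstep (v := W (j+1) + 1) (j := j)
    (by omega) (by omega) (by omega)
  have := hav (m-1) (j+1) hj (by omega) (by rw [Nat.sub_add_cancel hm1]; omega)
  omega
lemma avoid123_le_two {n : ℕ} {W : ℕ → ℕ} (hpos : ∀ j, j < n → 1 ≤ W j) (h0 : W 0 = 1)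
    (hstep : ∀ j, j + 1 < n → W (j+1) ≤ W j + 1)
    (hav : ∀ i k, k < n → i + 1 < k → W i < W (i+1) → ¬ W (i+1) < W k) :
    ∀ k, k < n → W k ≤ 2 := by
  intro k
  induction k using Nat.strong_induction_on with
  | _ k ih =>
    intro hk
    by_contra hgt
    push_neg at hgt
    have hk1 : 1 ≤ k := by
      rcases Nat.eq_zero_or_pos k with h | h
      · rw [h, h0] at hgt; omega
      · exact h
    have hk1' : W (k-1) ≤ 2 := ih (k-1) (by omega) (by omega)
    have hstep' : W (k-1+1) ≤ W (k-1) + 1 := hstep _ (by omega)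
    rw [Nat.sub_add_cancel hk1] at hstep'
    -- W k = 3, W (k-1) = 2
    have hk2 : 2 ≤ k := by
      rcases Nat.lt_or_ge k 2 with h | h
      · have hk1'' : k = 1 := by omega
        have h01 : W 1 ≤ W 0 + 1 := hstep 0 (by omega)
        rw [hk1''] at hgt; omega
      · exact h
    -- i = greatest index ≤ k-1 with W = 1
    classical
    set i := Nat.findGreatest (fun m => W m = 1) (k-1) with hi
    have hPi : W i = 1 := Nat.findGreatest_spec (P := fun m => W m = 1) (Nat.zero_le _) h0
    have hile : i ≤ k - 1 := Nat.findGreatest_le _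
    have hine : i ≠ k - 1 := by intro h; rw [h] at hPi; omega
    have hgr : ∀ m, i < m → m ≤ k - 1 → W m ≠ 1 :=
      fun m h1 h2 => Nat.findGreatest_is_greatest (P := fun m => W m = 1) h1 h2
    have hWi1 : W (i+1) = 2 := by
      have h1 : W (i+1) ≠ 1 := hgr (i+1) (by omega) (by omega)
      have h2 : 1 ≤ W (i+1) := hpos _ (by omega)
      have h3 : W (i+1) ≤ W i + 1 := hstep _ (by omega)
      omega
    exact hav i k hk (by omega) (by omega) (by omega)
lemma avoid122_struct {n : ℕ} {W : ℕ → ℕ} (hpos : ∀ j, j < n → 1 ≤ W j) (h0 : W 0 = 1)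
    (hstep : ∀ j, j + 1 < n → W (j+1) ≤ W j + 1)
    (hav : ∀ i k, k < n → i + 1 < k → W i < W (i+1) → W (i+1) ≠ W k) :
    (∀ j, j < n → W j = 1) ∨
    ∃ s e, 1 ≤ s ∧ s ≤ e ∧ e < n ∧
      (∀ j, j < n → W j = if s ≤ j ∧ j ≤ e then j - s + 2 else 1) := by
  classical
  by_cases hall : ∀ j, j < n → W j = 1
  · exact Or.inl hall
  right
  push_neg at hall
  obtain ⟨t, ht, htW⟩ := hall
  have ht2 : 2 ≤ W t := by have := hpos t ht; omega
  have hn : 0 < n := by omega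
  -- s := first index with W ≥ 2
  have hex : ∃ m, 2 ≤ W m := ⟨t, ht2⟩
  set s := Nat.find hex with hs
  have hsspec : 2 ≤ W s := Nat.find_spec hex
  have hst : s ≤ t := Nat.find_min' hex ht2
  have hsn : s < n := by omega
  have hs1 : 1 ≤ s := by
    rcases Nat.eq_zero_or_pos s with h | h
    · exfalso; rw [h, h0] at hsspec; omega
    · exact h
  have hsmin : ∀ m, m < s → W m < 2 := fun m hm => by
    have := Nat.find_min hex hm; omega
  have hWs : W s = 2 := by
    have h1 : W (s-1+1) ≤ W (s-1) + 1 := hstep _ (by omega)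
    rw [Nat.sub_add_cancel hs1] at h1
    have := hsmin (s-1) (by omega)
    omega
  -- e := last index ≤ n-1 with W ≥ 2
  set e := Nat.findGreatest (fun m => 2 ≤ W m) (n-1) with he
  have hespec : 2 ≤ W e :=
    Nat.findGreatest_spec (P := fun m => 2 ≤ W m) (m := s) (by omega) hsspec
  have heen : e ≤ n - 1 := Nat.findGreatest_le _
  have hse : s ≤ e := Nat.le_findGreatest (by omega) hsspec
  have hemax : ∀ m, e < m → m ≤ n - 1 → W m < 2 := fun m h1 h2 => by
    have := Nat.findGreatest_is_greatest (P := fun m => 2 ≤ W m) h1 h2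
    omega
  -- Claim A : no index > s has value 2
  have hA : ∀ k, s < k → k < n → W k ≠ 2 := by
    intro k hk1 hk2 hWk
    have h1 : W (s-1+1) = 2 := by rw [Nat.sub_add_cancel hs1]; exact hWs
    have h2 : W (s-1) = 1 := by have := hsmin (s-1) (by omega); have := hpos (s-1) (by omega); omega
    exact hav (s-1) k hk2 (by omega) (by omega) (by omega)
  -- Claim B : on [s, e], values ≥ 2
  have hB : ∀ j, s ≤ j → j ≤ e → 2 ≤ W j := by
    intro j hj1 hj2
    by_contra hlt
    push_neg at hlt
    have hje : j < e := by
      rcases Nat.lt_or_ge j e with h | h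
      · exact h
      · exfalso; have : j = e := by omega
        rw [this] at hlt; omega
    have hex2 : ∃ m, j < m ∧ 2 ≤ W m := ⟨e, hje, hespec⟩
    set k := Nat.find hex2 with hk
    obtain ⟨hk1, hk2⟩ : j < k ∧ 2 ≤ W k := Nat.find_spec hex2
    have hke : k ≤ e := Nat.find_min' hex2 ⟨hje, hespec⟩
    have hkn : k < n := by omega
    have hWk1 : W (k-1) = 1 := by
      rcases Nat.eq_or_lt_of_le hk1 with h | h
      · have : k - 1 = j := by omega
        rw [this]; have := hpos j (by omega); omega
      · have hmin := Nat.find_min hex2 (m := k - 1) (by omega)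
        push_neg at hmin
        have := hmin (by omega)
        have := hpos (k-1) (by omega)
        omega
    have hsk : W (k-1+1) ≤ W (k-1) + 1 := hstep _ (by omega)
    rw [Nat.sub_add_cancel (by omega : 1 ≤ k)] at hsk
    exact hA k (by omega) hkn (by omega)
  -- Claim C : on [s, e], W (s + d) = d + 2
  have hC : ∀ d, s + d ≤ e → W (s + d) = d + 2 := by
    intro d
    induction d with
    | zero => intro _; simpa using hWs
    | succ d ih =>
      intro hd
      have hW : W (s+d) = d + 2 := ih (by omega)
      have hstep' : W (s+d+1) ≤ W (s+d) + 1 := hstep _ (by omega)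
      by_contra hne
      have hle : W (s+(d+1)) ≤ W (s+d) := by
        have : s + (d+1) = s + d + 1 := by omega
        rw [this] at hne ⊢; omega
      have h2 : 2 ≤ W (s+(d+1)) := hB _ (by omega) (by omega)
      obtain ⟨m, hmle, hm1, hWm, hWm1⟩ := first_crossing h0 hstep
        (v := W (s+(d+1))) (j := s+d) (by omega) (by omega) (by omega)
      have := hav (m-1) (s+(d+1)) (by omega) (by omega)
        (by rw [Nat.sub_add_cancel hm1]; omega)
      rw [Nat.sub_add_cancel hm1] at this
      omega
    -- done
  refine ⟨s, e, hs1, hse, by omega, ?_⟩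
  intro j hj
  by_cases hcase : s ≤ j ∧ j ≤ e
  · rw [if_pos hcase]
    have := hC (j - s) (by omega)
    rw [Nat.add_sub_cancel' hcase.1] at this
    omega
  · rw [if_neg hcase]
    push_neg at hcase
    rcases Nat.lt_or_ge j s with h | h
    · have := hsmin j h; have := hpos j hj; omega
    · have := hemax j (by omega) (by omega); have := hpos j hj; omega
def gstep (b : ℕ → Bool) : ℕ → ℕ
  | 0 => 1
  | j+1 => gstep b j + (if b j then 1 else 0)
lemma gstep_zero (b : ℕ → Bool) : gstep b 0 = 1 := rfl
lemma gstep_succ (b : ℕ → Bool) (j : ℕ) :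
    gstep b (j+1) = gstep b j + (if b j then 1 else 0) := rfl
lemma gstep_mono (b : ℕ → Bool) : Monotone (gstep b) := by
  apply monotone_nat_of_le_succ
  intro j
  rw [gstep_succ]
  omega
lemma gstep_pos (b : ℕ → Bool) (j : ℕ) : 1 ≤ gstep b j := by
  have := gstep_mono b (Nat.zero_le j)
  rw [gstep_zero] at this
  omega
def extB (n : ℕ) (b : Fin (n-1) → Bool) : ℕ → Bool :=
  fun i => if h : i < n-1 then b ⟨i, h⟩ else false
def f121 (n : ℕ) (b : Fin (n-1) → Bool) : Fin n → ℕ :=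
  fun j => gstep (extB n b) j.val
def f123 (n : ℕ) (b : Fin (n-1) → Bool) : Fin n → ℕ :=
  fun j => if j.val = 0 then 1 else if extB n b (j.val - 1) then 2 else 1
def f122 (n : ℕ) (p : ℕ × ℕ) : Fin n → ℕ :=
  fun j => if p.1 ≤ j.val ∧ j.val ≤ p.2 then j.val - p.1 + 2 else 1
lemma f121_injective (n : ℕ) : Function.Injective (f121 n) := by
  intro b b' h
  funext i
  have h1 : gstep (extB n b) (i.val + 1) = gstep (extB n b') (i.val + 1) :=
    congrFun h ⟨i.val + 1, by omega⟩
  have h2 : gstep (extB n b) i.val = gstep (extB n b') i.val :=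
    congrFun h ⟨i.val, by omega⟩
  rw [gstep_succ, gstep_succ, h2] at h1
  have e1 : extB n b i.val = b i := by simp [extB, i.isLt]
  have e2 : extB n b' i.val = b' i := by simp [extB, i.isLt]
  rw [e1, e2] at h1
  cases hb : b i <;> cases hb' : b' i <;> simp [hb, hb'] at h1 ⊢
lemma f123_injective (n : ℕ) : Function.Injective (f123 n) := by
  intro b b' h
  funext i
  have h1 : f123 n b ⟨i.val + 1, by omega⟩ = f123 n b' ⟨i.val + 1, by omega⟩ :=
    congrFun h _
  simp only [f123] at h1
  have h0 : ¬(i.val + 1 = 0) := by omega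
  rw [if_neg h0, if_neg h0] at h1
  have e1 : extB n b (i.val + 1 - 1) = b i := by simp [extB, i.isLt]
  have e2 : extB n b' (i.val + 1 - 1) = b' i := by simp [extB, i.isLt]
  rw [e1, e2] at h1
  cases hb : b i <;> cases hb' : b' i <;> simp [hb, hb'] at h1 ⊢
lemma set121 (n : ℕ) (hn : 1 ≤ n) :
    {w : Fin n → ℕ | IsCatalanWord w ∧ ¬ Contains12_1 w} = Set.range (f121 n) := by
  ext w
  simp only [Set.mem_setOf_eq, Set.mem_range]
  constructor
  · rintro ⟨⟨hpos', h0', hstep'⟩, hav'⟩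
    classical
    set W : ℕ → ℕ := fun j => if h : j < n then w ⟨j, h⟩ else 1 with hW
    have hWdef : ∀ (j : ℕ) (h : j < n), w ⟨j, h⟩ = W j := by
      intro j h; simp only [hW]; rw [dif_pos h]
    have hpos : ∀ j, j < n → 1 ≤ W j := fun j h => by rw [← hWdef j h]; exact hpos' _
    have h0 : W 0 = 1 := by rw [← hWdef 0 (by omega)]; exact h0' (by omega)
    have hstep : ∀ j, j + 1 < n → W (j+1) ≤ W j + 1 := by
      intro j h
      rw [← hWdef (j+1) h, ← hWdef j (by omega)]
      exact hstep' j h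
    have hav : ∀ i k, k < n → i + 1 < k → W i < W (i+1) → W k ≠ W i := by
      intro i k hk hik hlt heq
      exact hav' ⟨i, k, hk, hik, by
        rw [hWdef i (by omega), hWdef (i+1) (by omega)]; exact hlt, by
        rw [hWdef k hk, hWdef i (by omega)]; omega⟩
    have hmono := avoid121_mono hpos h0 hstep hav
    refine ⟨fun i => decide (W (i.val + 1) = W i.val + 1), ?_⟩
    have key : ∀ m, m < n → gstep (extB n (fun i => decide (W (i.val + 1) = W i.val + 1))) m = W m := by
      intro m
      induction m with
      | zero => intro _; rw [gstep_zero, h0]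
      | succ m ih =>
        intro hm
        rw [gstep_succ, ih (by omega)]
        have hext : extB n (fun i => decide (W (i.val + 1) = W i.val + 1)) m
            = decide (W (m + 1) = W m + 1) := by
          simp [extB, (by omega : m < n - 1)]
        rw [hext]
        have h1 := hstep m hm
        have h2 := hmono m hm
        by_cases hc : W (m+1) = W m + 1
        · simp [hc]
        · have : W (m+1) = W m := by omega
          simp [this, hc]
    funext j
    rw [hWdef j.val j.isLt]
    simp only [f121]
    exact key j.val j.isLt
  · rintro ⟨b, rfl⟩
    have hmono := gstep_mono (extB n b)
    refine ⟨⟨fun i => gstep_pos _ _, fun h => gstep_zero _, fun i h => ?_⟩, ?_⟩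
    · show gstep (extB n b) (i+1) ≤ gstep (extB n b) i + 1
      rw [gstep_succ]; split <;> omega
    · rintro ⟨i, k, hk, hik, hlt, heq⟩
      simp only [f121] at hlt heq
      have : gstep (extB n b) (i+1) ≤ gstep (extB n b) k := hmono (by omega)
      omega
lemma count121 (n : ℕ) (hn : 1 ≤ n) :
    Set.ncard {w : Fin n → ℕ | IsCatalanWord w ∧ ¬ Contains12_1 w} = 2 ^ (n - 1) := by
  rw [set121 n hn, ← Set.image_univ,
    Set.ncard_image_of_injective _ (f121_injective n),
    Set.ncard_univ]
  simp [Nat.card_eq_fintype_card]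
lemma f123_le_two (n : ℕ) (b : Fin (n-1) → Bool) (j : Fin n) :
    1 ≤ f123 n b j ∧ f123 n b j ≤ 2 := by
  simp only [f123]
  split <;> [omega; (split <;> omega)]
lemma set123 (n : ℕ) (hn : 1 ≤ n) :
    {w : Fin n → ℕ | IsCatalanWord w ∧ ¬ Contains12_3 w} = Set.range (f123 n) := by
  ext w
  simp only [Set.mem_setOf_eq, Set.mem_range]
  constructor
  · rintro ⟨⟨hpos', h0', hstep'⟩, hav'⟩
    classical
    set W : ℕ → ℕ := fun j => if h : j < n then w ⟨j, h⟩ else 1 with hW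
    have hWdef : ∀ (j : ℕ) (h : j < n), w ⟨j, h⟩ = W j := by
      intro j h; simp only [hW]; rw [dif_pos h]
    have hpos : ∀ j, j < n → 1 ≤ W j := fun j h => by rw [← hWdef j h]; exact hpos' _
    have h0 : W 0 = 1 := by rw [← hWdef 0 (by omega)]; exact h0' (by omega)
    have hstep : ∀ j, j + 1 < n → W (j+1) ≤ W j + 1 := by
      intro j h
      rw [← hWdef (j+1) h, ← hWdef j (by omega)]
      exact hstep' j h
    have hav : ∀ i k, k < n → i + 1 < k → W i < W (i+1) → ¬ W (i+1) < W k := by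
      intro i k hk hik hlt hlt2
      exact hav' ⟨i, k, hk, hik, by
        rw [hWdef i (by omega), hWdef (i+1) (by omega)]; exact hlt, by
        rw [hWdef k hk, hWdef (i+1) (by omega)]; omega⟩
    have hle2 := avoid123_le_two hpos h0 hstep hav
    refine ⟨fun i => decide (W (i.val + 1) = 2), ?_⟩
    funext j
    rw [hWdef j.val j.isLt]
    simp only [f123]
    rcases Nat.eq_zero_or_pos j.val with h | h
    · rw [if_pos h, h, h0]
    · rw [if_neg (by omega)]
      have hext : extB n (fun i => decide (W (i.val + 1) = 2)) (j.val - 1)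
          = decide (W (j.val - 1 + 1) = 2) := by
        simp [extB, (by omega : j.val - 1 < n - 1)]
      rw [hext, Nat.sub_add_cancel h]
      have h1 := hpos j.val j.isLt
      have h2 := hle2 j.val j.isLt
      by_cases hc : W j.val = 2
      · simp [hc]
      · have : W j.val = 1 := by omega
        simp [this, hc]
  · rintro ⟨b, rfl⟩
    refine ⟨⟨fun i => (f123_le_two n b i).1, fun h => by simp [f123], fun i h => ?_⟩, ?_⟩
    · have := (f123_le_two n b ⟨i+1, h⟩).2
      have := (f123_le_two n b ⟨i, by omega⟩).1
      omega
    · rintro ⟨i, k, hk, hik, hlt, hlt2⟩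
      have := (f123_le_two n b ⟨i, by omega⟩).1
      have h2 := (f123_le_two n b ⟨i+1, by omega⟩).2
      have h3 := (f123_le_two n b ⟨k, hk⟩).2
      omega
def idx122 (n : ℕ) : Finset (ℕ × ℕ) :=
  (Finset.range n).biUnion (fun e => (Finset.Icc 1 e).image (fun s => (s, e)))
lemma mem_idx122 {n : ℕ} {p : ℕ × ℕ} :
    p ∈ idx122 n ↔ 1 ≤ p.1 ∧ p.1 ≤ p.2 ∧ p.2 < n := by
  simp only [idx122, Finset.mem_biUnion, Finset.mem_range, Finset.mem_image, Finset.mem_Icc]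
  constructor
  · rintro ⟨e, he, s, ⟨hs1, hs2⟩, rfl⟩
    exact ⟨hs1, hs2, he⟩
  · rintro ⟨h1, h2, h3⟩
    exact ⟨p.2, h3, p.1, ⟨h1, h2⟩, rfl⟩
lemma card_idx122 (n : ℕ) : (idx122 n).card = n.choose 2 := by
  rw [idx122, Finset.card_biUnion]
  · have : ∀ e ∈ Finset.range n, ((Finset.Icc 1 e).image (fun s => (s, e))).card = e := by
      intro e _
      rw [Finset.card_image_of_injective _ (fun a b h => (Prod.mk.injEq _ _ _ _).mp h |>.1),
        Nat.card_Icc]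
      omega
    rw [Finset.sum_congr rfl this]
    have := Finset.sum_range_id_mul_two n
    rw [Nat.choose_two_right]
    omega
  · intro x _ y _ hxy
    rw [Function.onFun, Finset.disjoint_left]
    rintro p hp hq
    simp only [Finset.mem_image, Finset.mem_Icc] at hp hq
    obtain ⟨s, _, rfl⟩ := hp
    obtain ⟨s', _, h⟩ := hq
    exact hxy ((Prod.mk.injEq _ _ _ _).mp h).2.symm
lemma set122 (n : ℕ) (hn : 1 ≤ n) :
    {w : Fin n → ℕ | IsCatalanWord w ∧ ¬ Contains12_2 w} =
      insert (fun _ => 1) (f122 n '' ↑(idx122 n)) := by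
  ext w
  simp only [Set.mem_setOf_eq, Set.mem_insert_iff, Set.mem_image, Finset.mem_coe]
  constructor
  · rintro ⟨⟨hpos', h0', hstep'⟩, hav'⟩
    classical
    set W : ℕ → ℕ := fun j => if h : j < n then w ⟨j, h⟩ else 1 with hW
    have hWdef : ∀ (j : ℕ) (h : j < n), w ⟨j, h⟩ = W j := by
      intro j h; simp only [hW]; rw [dif_pos h]
    have hpos : ∀ j, j < n → 1 ≤ W j := fun j h => by rw [← hWdef j h]; exact hpos' _
    have h0 : W 0 = 1 := by rw [← hWdef 0 (by omega)]; exact h0' (by omega)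
    have hstep : ∀ j, j + 1 < n → W (j+1) ≤ W j + 1 := by
      intro j h
      rw [← hWdef (j+1) h, ← hWdef j (by omega)]
      exact hstep' j h
    have hav : ∀ i k, k < n → i + 1 < k → W i < W (i+1) → W (i+1) ≠ W k := by
      intro i k hk hik hlt heq
      exact hav' ⟨i, k, hk, hik, by
        rw [hWdef i (by omega), hWdef (i+1) (by omega)]; exact hlt, by
        rw [hWdef k hk, hWdef (i+1) (by omega)]; omega⟩
    rcases avoid122_struct hpos h0 hstep hav with h | ⟨s, e, hs1, hse, hen, hform⟩
    · left
      funext j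
      rw [show w j = w ⟨j.val, j.isLt⟩ from rfl, hWdef j.val j.isLt]
      exact h j.val j.isLt
    · right
      refine ⟨(s, e), mem_idx122.mpr ⟨hs1, hse, hen⟩, ?_⟩
      funext j
      rw [show f122 n (s, e) j = _ from rfl]
      rw [show w j = w ⟨j.val, j.isLt⟩ from rfl, hWdef j.val j.isLt]
      exact (hform j.val j.isLt).symm
  · rintro (rfl | ⟨p, hp, rfl⟩)
    · refine ⟨⟨fun _ => le_refl 1, fun _ => rfl, fun i h => by simp⟩, ?_⟩
      rintro ⟨i, k, hk, hik, hlt, _⟩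
      exact absurd hlt (by simp)
    · rw [mem_idx122] at hp
      obtain ⟨hp1, hp2, hp3⟩ := hp
      refine ⟨⟨fun j => ?_, fun h => ?_, fun i h => ?_⟩, ?_⟩
      · simp only [f122]; split <;> omega
      · simp only [f122]; rw [if_neg (by omega)]
      · simp only [f122]; split <;> split <;> omega
      · rintro ⟨i, k, hk, hik, hlt, heq⟩
        simp only [f122] at hlt heq
        split_ifs at hlt heq <;> omega
lemma count122 (n : ℕ) (hn : 1 ≤ n) :
    Set.ncard {w : Fin n → ℕ | IsCatalanWord w ∧ ¬ Contains12_2 w} = n.choose 2 + 1 := by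
  rw [set122 n hn, ← Finset.coe_image]
  have hinj : Set.InjOn (f122 n) ↑(idx122 n) := by
    rintro ⟨p1, p2⟩ hp ⟨q1, q2⟩ hq h
    rw [Finset.mem_coe, mem_idx122] at hp hq
    obtain ⟨hp1, hp2, hp3⟩ := hp
    obtain ⟨hq1, hq2, hq3⟩ := hq
    simp only at hp1 hp2 hp3 hq1 hq2 hq3
    have e1 : q1 ≤ p1 ∧ p1 ≤ q2 ∧ p1 - q1 = 0 := by
      have hx := congrFun h ⟨p1, by omega⟩
      simp only [f122] at hx
      split_ifs at hx <;> omega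
    have e2 : p1 ≤ q1 := by
      have hx := congrFun h ⟨q1, by omega⟩
      simp only [f122] at hx
      split_ifs at hx <;> omega
    have e3 : p2 ≤ q2 := by
      have hx := congrFun h ⟨p2, by omega⟩
      simp only [f122] at hx
      split_ifs at hx <;> omega
    have e4 : q2 ≤ p2 := by
      have hx := congrFun h ⟨q2, by omega⟩
      simp only [f122] at hx
      split_ifs at hx <;> omega
    simp only [Prod.mk.injEq]
    omega
  have hnotmem : (fun _ => (1:ℕ)) ∉ (↑((idx122 n).image (f122 n)) : Set (Fin n → ℕ)) := by
    rw [Finset.mem_coe, Finset.mem_image]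
    rintro ⟨p, hp, heq⟩
    rw [mem_idx122] at hp
    have hx := congrFun heq ⟨p.1, by omega⟩
    simp only [f122] at hx
    rw [if_pos ⟨le_refl _, hp.2.1⟩] at hx
    omega
  rw [Set.ncard_insert_of_notMem hnotmem (Set.toFinite _), Set.ncard_coe_finset,
    Finset.card_image_of_injOn hinj, card_idx122]

lemma count123 (n : ℕ) (hn : 1 ≤ n) :
    Set.ncard {w : Fin n → ℕ | IsCatalanWord w ∧ ¬ Contains12_3 w} = 2 ^ (n - 1) := by
  rw [set123 n hn, ← Set.image_univ,
    Set.ncard_image_of_injective _ (f123_injective n), Set.ncard_univ]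
  simp [Nat.card_eq_fintype_card]

theorem catalan_avoid_12_1_12_3_12_2 (n : ℕ) (hn : 1 ≤ n) :
    Set.ncard {w : Fin n → ℕ | IsCatalanWord w ∧ ¬ Contains12_1 w} = 2 ^ (n - 1) ∧
    Set.ncard {w : Fin n → ℕ | IsCatalanWord w ∧ ¬ Contains12_3 w} = 2 ^ (n - 1) ∧
    Set.ncard {w : Fin n → ℕ | IsCatalanWord w ∧ ¬ Contains12_2 w} =
      Nat.choose n 2 + 1 := by
  exact ⟨count121 n hn, count123 n hn, count122 n hn⟩
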